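/- With ν = (μ + μ∘T)/2 and the matrix representation ν(I) = ‖M_I‖ (half the sum of all entries of the product matrix M_I = M_{ε₁}⋯M_{ε_n}), one has ν(IJ) ≤ 2 ν(I) ν(J) for all ℓ-adic intervals I, J, and consequently the sequence v_n = Σ_{I∈F_n} ν(I)^q satisfies, for each fixed q ∈ ℝ, that v_n^{1/n} converges. -/

import Mathlib

open MeasureTheory Filter Topology ENNReal

noncomputable section

/-- The ℓ-adic interval of generation `n` with index `k`. -/
def adicI (ℓ n k : ℕ) : Set ℝ := Set.Ico ((k : ℝ) / ℓ ^ n) ((k + 1 : ℝ) / ℓ ^ n)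

/-- The mass of a set for a measure, as a real number. -/
def mss (μ : Measure ℝ) (s : Set ℝ) : ℝ := (μ s).toReal

/-- The `2ℓ` similitudes of ratio `±1/ℓ`. -/
def simMapT (ℓ i : ℕ) (x : ℝ) : ℝ :=
  if i < ℓ then x / ℓ + i / ℓ else -x / ℓ + ((i - ℓ + 1 : ℕ) : ℝ) / ℓ

/-- The reflection `T(x) = 1 - x`. -/
def refl1 (x : ℝ) : ℝ := 1 - x

/-- The measure `ν = (μ + μ ∘ T)/2`. -/
def nuT (μ : Measure ℝ) : Measure ℝ := (2 : ℝ≥0∞)⁻¹ • (μ + μ.map refl1)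

/-- Partition-function sequence `u_n = ∑_{I ∈ F_n, m(I) ≠ 0} m(I)^q`. -/
def uSeq (ℓ : ℕ) (μ : Measure ℝ) (q : ℝ) (n : ℕ) : ℝ :=
  ∑ k ∈ (Finset.range (ℓ ^ n)).filter (fun k => mss μ (adicI ℓ n k) ≠ 0),
    mss μ (adicI ℓ n k) ^ q

/-- The `L^q`-spectrum `τ(q)` of a measure, defined with a `limsup`. -/
def Lsp (ℓ : ℕ) (μ : Measure ℝ) (q : ℝ) : ℝ :=
  limsup (fun n : ℕ => Real.log (uSeq ℓ μ q n) / (n * Real.log ℓ)) atTop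

/-- `‖M‖₁`: the sum of the first-row entries. -/
def normOne (M : Matrix (Fin 2) (Fin 2) ℝ) : ℝ := M 0 0 + M 0 1

/-- `‖M‖`: half of the sum of all entries. -/
def normH2 (M : Matrix (Fin 2) (Fin 2) ℝ) : ℝ := (M 0 0 + M 0 1 + M 1 0 + M 1 1) / 2

/-- The matrix `M_ε`. -/
def MmatT (ℓ : ℕ) (p : ℕ → ℝ) (ε : ℕ) : Matrix (Fin 2) (Fin 2) ℝ :=
  !![p ε, p (ε + ℓ); p (2 * ℓ - 1 - ε), p (ℓ - 1 - ε)]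

/-- The ℓ-adic interval `I_{ε₁⋯ε_n}` associated with a word. -/
def wordI (ℓ n : ℕ) (ε : Fin n → ℕ) : Set ℝ :=
  Set.Ico (∑ i : Fin n, (ε i : ℝ) / ℓ ^ ((i : ℕ) + 1))
    (∑ i : Fin n, (ε i : ℝ) / ℓ ^ ((i : ℕ) + 1) + 1 / ℓ ^ n)

/-- The ℓ-adic shift `σ(x) = ℓx (mod 1)`. -/
def shiftM (ℓ : ℕ) (x : ℝ) : ℝ := Int.fract (ℓ * x)

/-- `I_n(x)`: the ℓ-adic interval of generation `n` containing `x`. -/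
def Iofx (ℓ n : ℕ) (x : ℝ) : Set ℝ := adicI ℓ n (⌊(ℓ : ℝ) ^ n * x⌋).toNat

/-- The level set `E_α(m)` of points of `[0,1)` with local dimension `α`. -/
def ESet (ℓ : ℕ) (μ : Measure ℝ) (α : ℝ) : Set ℝ :=
  {x ∈ Set.Ico (0 : ℝ) 1 |
    Tendsto (fun n : ℕ => -Real.log (mss μ (Iofx ℓ n x)) / (n * Real.log ℓ)) atTop (𝓝 α)}

namespace S14


lemma measurable_simMapT (ℓ i : ℕ) : Measurable (simMapT ℓ i) := by
  unfold simMapT; split_ifs <;> fun_prop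

lemma measurable_refl1 : Measurable refl1 := by
  unfold refl1; fun_prop

variable {ℓ : ℕ} {p : ℕ → ℝ} {μ : Measure ℝ}

lemma self_eq (hself : μ = ∑ i ∈ Finset.range (2 * ℓ), ENNReal.ofReal (p i) • μ.map (simMapT ℓ i))
    {A : Set ℝ} (hA : MeasurableSet A) :
    μ A = ∑ i ∈ Finset.range (2 * ℓ), ENNReal.ofReal (p i) * μ (simMapT ℓ i ⁻¹' A) := by
  conv_lhs => rw [hself]
  rw [Measure.finset_sum_apply]
  exact Finset.sum_congr rfl fun i _ => by
    rw [Measure.smul_apply, smul_eq_mul, Measure.map_apply (measurable_simMapT ℓ i) hA]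

lemma Dsub (hℓ : 2 ≤ ℓ) {i : ℕ} (hi : i < 2 * ℓ) {t : ℝ} (ht : 0 ≤ t) :
    simMapT ℓ i ⁻¹' ({x : ℝ | x < -t} ∪ {x | 1 + t < x}) ⊆
      {x : ℝ | x < -((ℓ : ℝ) * t)} ∪ {x | 1 + (ℓ : ℝ) * t < x} := by
  have hl : (1 : ℝ) ≤ (ℓ : ℝ) := by exact_mod_cast Nat.one_le_of_lt hℓ
  have hl0 : (0 : ℝ) < ℓ := by linarith
  intro x hx
  simp only [Set.mem_preimage, Set.mem_union, Set.mem_setOf_eq, simMapT] at hx ⊢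
  by_cases h : i < ℓ
  · rw [if_pos h] at hx
    have hi1 : (i : ℝ) ≤ (ℓ : ℝ) - 1 := by
      have : (i : ℝ) + 1 ≤ ℓ := by exact_mod_cast h
      linarith
    have hi0 : (0 : ℝ) ≤ i := Nat.cast_nonneg i
    rw [← add_div] at hx
    rcases hx with hx | hx
    · left
      have h3 : x + i < -t * ℓ := by
        have := (div_lt_iff₀ hl0).1 hx
        linarith
      nlinarith
    · right
      have h3 : (1 + t) * ℓ < x + i := (lt_div_iff₀ hl0).1 hx
      nlinarith
  · rw [if_neg h] at hx
    have h2 : ℓ ≤ i := le_of_not_gt h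
    have hc : ((i - ℓ + 1 : ℕ) : ℝ) = (i : ℝ) - ℓ + 1 := by
      push_cast [h2]; ring
    have hiu : (i : ℝ) ≤ 2 * ℓ - 1 := by
      have : (i : ℝ) + 1 ≤ 2 * ℓ := by exact_mod_cast hi
      linarith
    have hil : (ℓ : ℝ) ≤ i := by exact_mod_cast h2
    rw [hc, ← add_div] at hx
    rcases hx with hx | hx
    · right
      have h3 : -x + ((i : ℝ) - ℓ + 1) < -t * ℓ := by
        have := (div_lt_iff₀ hl0).1 hx
        linarith
      nlinarith
    · left
      have h3 : (1 + t) * ℓ < -x + ((i : ℝ) - ℓ + 1) := (lt_div_iff₀ hl0).1 hx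
      nlinarith

lemma measurableD (t : ℝ) : MeasurableSet ({x : ℝ | x < -t} ∪ {x | 1 + t < x}) :=
  (measurableSet_lt measurable_id measurable_const).union
    (measurableSet_lt measurable_const measurable_id)

lemma Dnull (hℓ : 2 ≤ ℓ) (hp : ∀ i, 0 ≤ p i)
    (hsum : ∑ i ∈ Finset.range (2 * ℓ), p i = 1)
    [IsProbabilityMeasure μ]
    (hself : μ = ∑ i ∈ Finset.range (2 * ℓ), ENNReal.ofReal (p i) • μ.map (simMapT ℓ i))
    {t : ℝ} (ht : 0 < t) :
    μ ({x : ℝ | x < -t} ∪ {x | 1 + t < x}) = 0 := by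
  have hl : (1 : ℝ) ≤ (ℓ : ℝ) := by exact_mod_cast Nat.one_le_of_lt hℓ
  set D : ℝ → Set ℝ := fun s => {x : ℝ | x < -s} ∪ {x | 1 + s < x} with hD
  have hstep : ∀ s : ℝ, 0 ≤ s → μ (D s) ≤ μ (D ((ℓ : ℝ) * s)) := by
    intro s hs
    rw [self_eq hself (measurableD s)]
    calc ∑ i ∈ Finset.range (2 * ℓ), ENNReal.ofReal (p i) * μ (simMapT ℓ i ⁻¹' D s)
        ≤ ∑ i ∈ Finset.range (2 * ℓ), ENNReal.ofReal (p i) * μ (D ((ℓ : ℝ) * s)) := by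
          refine Finset.sum_le_sum fun i hi => ?_
          exact mul_le_mul_right (measure_mono (Dsub hℓ (Finset.mem_range.1 hi) hs)) _
      _ = (∑ i ∈ Finset.range (2 * ℓ), ENNReal.ofReal (p i)) * μ (D ((ℓ : ℝ) * s)) :=
          (Finset.sum_mul _ _ _).symm
      _ = μ (D ((ℓ : ℝ) * s)) := by
          rw [← ENNReal.ofReal_sum_of_nonneg (fun i _ => hp i), hsum, ofReal_one, one_mul]
  have hiter : ∀ n : ℕ, μ (D t) ≤ μ (D ((ℓ : ℝ) ^ n * t)) := by
    intro n
    induction n with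
    | zero => simp
    | succ n ih =>
      refine ih.trans ?_
      have := hstep ((ℓ : ℝ) ^ n * t) (by positivity)
      rw [← mul_assoc] at this
      calc μ (D ((ℓ:ℝ) ^ n * t)) ≤ μ (D ((ℓ:ℝ) * (ℓ:ℝ) ^ n * t)) := this
        _ = μ (D ((ℓ:ℝ) ^ (n+1) * t)) := by rw [pow_succ]; ring_nf
  have hanti : Antitone fun n : ℕ => D ((ℓ : ℝ) ^ n * t) := by
    intro m n hmn x hx
    have hpow : (ℓ : ℝ) ^ m * t ≤ (ℓ : ℝ) ^ n * t :=
      mul_le_mul_of_nonneg_right (pow_le_pow_right₀ (by linarith) hmn) ht.le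
    rcases hx with hx | hx
    · exact Or.inl (by simp only [Set.mem_setOf_eq] at hx ⊢; linarith)
    · exact Or.inr (by simp only [Set.mem_setOf_eq] at hx ⊢; linarith)
  have hempty : ⋂ n : ℕ, D ((ℓ : ℝ) ^ n * t) = ∅ := by
    ext x
    simp only [Set.mem_iInter, Set.mem_empty_iff_false, iff_false, not_forall]
    obtain ⟨n, hn⟩ := pow_unbounded_of_one_lt (max (-x) (x - 1) / t) (show (1:ℝ) < ℓ by
      exact_mod_cast hℓ.trans_lt' one_lt_two)
    refine ⟨n, ?_⟩
    have hxt : max (-x) (x - 1) < (ℓ : ℝ) ^ n * t := by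
      rw [div_lt_iff₀ ht] at hn; linarith [hn]
    intro hx
    rcases hx with hx | hx
    · simp only [Set.mem_setOf_eq] at hx
      have := le_max_left (-x) (x - 1)
      linarith
    · simp only [Set.mem_setOf_eq] at hx
      have := le_max_right (-x) (x - 1)
      linarith
  have htend : Tendsto (fun n : ℕ => μ (D ((ℓ : ℝ) ^ n * t))) atTop (𝓝 0) := by
    have := tendsto_measure_iInter_atTop (μ := μ)
      (fun n => (measurableD _).nullMeasurableSet) hanti ⟨0, measure_ne_top μ _⟩
    rw [hempty] at this
    simpa only [measure_empty, Function.comp_def, hD] using this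
  have : μ (D t) ≤ 0 := ge_of_tendsto' htend fun n => hiter n
  exact le_antisymm this zero_le

lemma null_lt0 (hℓ : 2 ≤ ℓ) (hp : ∀ i, 0 ≤ p i)
    (hsum : ∑ i ∈ Finset.range (2 * ℓ), p i = 1)
    [IsProbabilityMeasure μ]
    (hself : μ = ∑ i ∈ Finset.range (2 * ℓ), ENNReal.ofReal (p i) • μ.map (simMapT ℓ i)) :
    μ {x : ℝ | x < 0} = 0 := by
  have hsub : {x : ℝ | x < 0} ⊆
      ⋃ n : ℕ, ({x : ℝ | x < -(1 / ((n:ℝ) + 1))} ∪ {x | 1 + 1 / ((n:ℝ)+1) < x}) := by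
    intro x hx
    simp only [Set.mem_setOf_eq] at hx
    obtain ⟨n, hn⟩ := exists_nat_one_div_lt (show (0:ℝ) < -x by linarith)
    exact Set.mem_iUnion.2 ⟨n, Or.inl (by simp only [Set.mem_setOf_eq]; linarith)⟩
  exact measure_mono_null hsub (measure_iUnion_null fun n =>
    Dnull hℓ hp hsum hself (by positivity))

lemma null_gt1 (hℓ : 2 ≤ ℓ) (hp : ∀ i, 0 ≤ p i)
    (hsum : ∑ i ∈ Finset.range (2 * ℓ), p i = 1)
    [IsProbabilityMeasure μ]
    (hself : μ = ∑ i ∈ Finset.range (2 * ℓ), ENNReal.ofReal (p i) • μ.map (simMapT ℓ i)) :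
    μ {x : ℝ | 1 < x} = 0 := by
  have hsub : {x : ℝ | 1 < x} ⊆
      ⋃ n : ℕ, ({x : ℝ | x < -(1 / ((n:ℝ) + 1))} ∪ {x | 1 + 1 / ((n:ℝ)+1) < x}) := by
    intro x hx
    simp only [Set.mem_setOf_eq] at hx
    obtain ⟨n, hn⟩ := exists_nat_one_div_lt (show (0:ℝ) < x - 1 by linarith)
    exact Set.mem_iUnion.2 ⟨n, Or.inr (by simp only [Set.mem_setOf_eq]; linarith)⟩
  exact measure_mono_null hsub (measure_iUnion_null fun n =>
    Dnull hℓ hp hsum hself (by positivity))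

lemma pre_sing_lt {ℓ i : ℕ} (hℓ : 0 < ℓ) (hi : i < ℓ) (y : ℝ) :
    simMapT ℓ i ⁻¹' {y} = {(ℓ:ℝ) * y - i} := by
  have hne : (ℓ:ℝ) ≠ 0 := by positivity
  ext x
  simp only [Set.mem_preimage, Set.mem_singleton_iff, simMapT, if_pos hi, ← add_div]
  rw [div_eq_iff hne]
  constructor <;> intro h <;> nlinarith [h]

lemma pre_sing_ge {ℓ i : ℕ} (hℓ : 0 < ℓ) (hi : ℓ ≤ i) (y : ℝ) :
    simMapT ℓ i ⁻¹' {y} = {((i - ℓ + 1 : ℕ):ℝ) - (ℓ:ℝ) * y} := by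
  have hne : (ℓ:ℝ) ≠ 0 := by positivity
  ext x
  simp only [Set.mem_preimage, Set.mem_singleton_iff, simMapT, if_neg (by omega : ¬ i < ℓ),
    ← add_div]
  rw [div_eq_iff hne]
  constructor <;> intro h <;> nlinarith [h]

lemma atoms_null (hℓ : 2 ≤ ℓ) (hp : ∀ i, 0 ≤ p i)
    (hsum : ∑ i ∈ Finset.range (2 * ℓ), p i = 1)
    (hpos : ∀ i < ℓ, 0 < p i + p (i + ℓ))
    [IsProbabilityMeasure μ]
    (hself : μ = ∑ i ∈ Finset.range (2 * ℓ), ENNReal.ofReal (p i) • μ.map (simMapT ℓ i)) :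
    μ {(0:ℝ)} = 0 ∧ μ {(1:ℝ)} = 0 := by
  have hl0 : 0 < ℓ := by omega
  have hnull0 := null_lt0 hℓ hp hsum hself
  have hnull1 := null_gt1 hℓ hp hsum hself
  -- equation for μ {0}
  have hsub0 : ({0, ℓ} : Finset ℕ) ⊆ Finset.range (2*ℓ) := by
    intro x hx
    simp only [Finset.mem_insert, Finset.mem_singleton] at hx
    rcases hx with rfl | rfl <;> exact Finset.mem_range.2 (by omega)
  have h0 : μ {(0:ℝ)} = ENNReal.ofReal (p 0) * μ {(0:ℝ)} + ENNReal.ofReal (p ℓ) * μ {(1:ℝ)} := by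
    have hz : ∀ i ∈ Finset.range (2*ℓ), i ∉ ({0, ℓ} : Finset ℕ) →
        ENNReal.ofReal (p i) * μ (simMapT ℓ i ⁻¹' {(0:ℝ)}) = 0 := by
      intro i hi hnot
      simp only [Finset.mem_insert, Finset.mem_singleton, not_or] at hnot
      rw [Finset.mem_range] at hi
      by_cases hiℓ : i < ℓ
      · rw [pre_sing_lt hl0 hiℓ 0]
        have hmem : ((ℓ:ℝ) * 0 - i) ∈ {x : ℝ | x < 0} := by
          have : (1:ℝ) ≤ i := by exact_mod_cast Nat.one_le_iff_ne_zero.2 hnot.1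
          simp only [Set.mem_setOf_eq]; linarith
        rw [measure_mono_null (Set.singleton_subset_iff.2 hmem) hnull0, mul_zero]
      · rw [pre_sing_ge hl0 (by omega) 0]
        have hmem : (((i - ℓ + 1 : ℕ):ℝ) - (ℓ:ℝ) * 0) ∈ {x : ℝ | 1 < x} := by
          have : (2:ℝ) ≤ ((i - ℓ + 1 : ℕ):ℝ) := by exact_mod_cast (by omega : 2 ≤ i - ℓ + 1)
          simp only [Set.mem_setOf_eq]; linarith
        rw [measure_mono_null (Set.singleton_subset_iff.2 hmem) hnull1, mul_zero]
    have r1 : simMapT ℓ 0 ⁻¹' {(0:ℝ)} = {(0:ℝ)} := by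
      rw [pre_sing_lt hl0 hl0 0]; norm_num
    have r2 : simMapT ℓ ℓ ⁻¹' {(0:ℝ)} = {(1:ℝ)} := by
      rw [pre_sing_ge hl0 le_rfl 0]
      have h' : (ℓ - ℓ + 1 : ℕ) = 1 := by omega
      rw [h']; norm_num
    have h := self_eq hself (measurableSet_singleton (0:ℝ))
    rw [← Finset.sum_subset hsub0 hz, Finset.sum_pair (show (0:ℕ) ≠ ℓ by omega), r1, r2] at h
    exact h
  -- equation for μ {1}
  have hsub1 : ({ℓ-1, 2*ℓ-1} : Finset ℕ) ⊆ Finset.range (2*ℓ) := by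
    intro x hx
    simp only [Finset.mem_insert, Finset.mem_singleton] at hx
    rcases hx with rfl | rfl <;> exact Finset.mem_range.2 (by omega)
  have h1 : μ {(1:ℝ)} = ENNReal.ofReal (p (ℓ-1)) * μ {(1:ℝ)}
      + ENNReal.ofReal (p (2*ℓ-1)) * μ {(0:ℝ)} := by
    have hz : ∀ i ∈ Finset.range (2*ℓ), i ∉ ({ℓ-1, 2*ℓ-1} : Finset ℕ) →
        ENNReal.ofReal (p i) * μ (simMapT ℓ i ⁻¹' {(1:ℝ)}) = 0 := by
      intro i hi hnot
      simp only [Finset.mem_insert, Finset.mem_singleton, not_or] at hnot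
      rw [Finset.mem_range] at hi
      by_cases hiℓ : i < ℓ
      · rw [pre_sing_lt hl0 hiℓ 1]
        have hmem : ((ℓ:ℝ) * 1 - i) ∈ {x : ℝ | 1 < x} := by
          have : (i:ℝ) + 2 ≤ ℓ := by exact_mod_cast (by omega : i + 2 ≤ ℓ)
          simp only [Set.mem_setOf_eq]; linarith
        rw [measure_mono_null (Set.singleton_subset_iff.2 hmem) hnull1, mul_zero]
      · rw [pre_sing_ge hl0 (by omega) 1]
        have hmem : (((i - ℓ + 1 : ℕ):ℝ) - (ℓ:ℝ) * 1) ∈ {x : ℝ | x < 0} := by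
          have h2 : ((i - ℓ + 1 : ℕ):ℝ) + 1 ≤ (ℓ:ℝ) := by
            exact_mod_cast (by omega : i - ℓ + 1 + 1 ≤ ℓ)
          simp only [Set.mem_setOf_eq]; linarith
        rw [measure_mono_null (Set.singleton_subset_iff.2 hmem) hnull0, mul_zero]
    have r1 : simMapT ℓ (ℓ-1) ⁻¹' {(1:ℝ)} = {(1:ℝ)} := by
      rw [pre_sing_lt hl0 (by omega) 1]
      have h2 : ((ℓ-1 : ℕ):ℝ) = (ℓ:ℝ) - 1 := by
        have : (1:ℕ) ≤ ℓ := by omega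
        push_cast [this]; ring
      have h3 : ((ℓ:ℝ) * 1 - ((ℓ-1 : ℕ):ℝ)) = 1 := by rw [h2]; ring
      rw [h3]
    have r2 : simMapT ℓ (2*ℓ-1) ⁻¹' {(1:ℝ)} = {(0:ℝ)} := by
      rw [pre_sing_ge hl0 (by omega) 1]
      have h' : (2*ℓ-1 - ℓ + 1 : ℕ) = ℓ := by omega
      have h3 : ((2*ℓ-1 - ℓ + 1 : ℕ):ℝ) - (ℓ:ℝ) * 1 = 0 := by rw [h']; ring
      rw [h3]
    have h := self_eq hself (measurableSet_singleton (1:ℝ))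
    rw [← Finset.sum_subset hsub1 hz, Finset.sum_pair (show (ℓ-1:ℕ) ≠ 2*ℓ-1 by omega),
      r1, r2] at h
    exact h
  -- convert to real equations
  set a := (μ {(0:ℝ)}).toReal with hadef
  set b := (μ {(1:ℝ)}).toReal with hbdef
  have hfin0 : μ {(0:ℝ)} ≠ ⊤ := measure_ne_top μ _
  have hfin1 : μ {(1:ℝ)} ≠ ⊤ := measure_ne_top μ _
  have e0 : a = p 0 * a + p ℓ * b := by
    have := congrArg ENNReal.toReal h0
    rwa [ENNReal.toReal_add (ENNReal.mul_ne_top ENNReal.ofReal_ne_top hfin0)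
        (ENNReal.mul_ne_top ENNReal.ofReal_ne_top hfin1),
      ENNReal.toReal_mul, ENNReal.toReal_mul,
      ENNReal.toReal_ofReal (hp 0), ENNReal.toReal_ofReal (hp ℓ)] at this
  have e1 : b = p (ℓ-1) * b + p (2*ℓ-1) * a := by
    have := congrArg ENNReal.toReal h1
    rwa [ENNReal.toReal_add (ENNReal.mul_ne_top ENNReal.ofReal_ne_top hfin1)
        (ENNReal.mul_ne_top ENNReal.ofReal_ne_top hfin0),
      ENNReal.toReal_mul, ENNReal.toReal_mul,
      ENNReal.toReal_ofReal (hp (ℓ-1)), ENNReal.toReal_ofReal (hp (2*ℓ-1))] at this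
  have h4 : p 0 + p (ℓ-1) + p ℓ + p (2*ℓ-1) ≤ 1 := by
    have d1 : (0:ℕ) ∉ ({ℓ-1, ℓ, 2*ℓ-1} : Finset ℕ) := by
      simp only [Finset.mem_insert, Finset.mem_singleton]; push_neg; omega
    have d2 : (ℓ-1:ℕ) ∉ ({ℓ, 2*ℓ-1} : Finset ℕ) := by
      simp only [Finset.mem_insert, Finset.mem_singleton]; push_neg; omega
    have d3 : (ℓ:ℕ) ∉ ({2*ℓ-1} : Finset ℕ) := by
      simp only [Finset.mem_singleton]; omega
    have heq : p 0 + p (ℓ-1) + p ℓ + p (2*ℓ-1) = ∑ i ∈ ({0, ℓ-1, ℓ, 2*ℓ-1} : Finset ℕ), p i := by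
      rw [Finset.sum_insert d1, Finset.sum_insert d2, Finset.sum_insert d3,
        Finset.sum_singleton]
      ring
    rw [heq, ← hsum]
    refine Finset.sum_le_sum_of_subset_of_nonneg ?_ (fun i _ _ => hp i)
    intro x hx
    simp only [Finset.mem_insert, Finset.mem_singleton] at hx
    rcases hx with rfl | rfl | rfl | rfl <;> exact Finset.mem_range.2 (by omega)
  have hp0ℓ : 0 < p 0 + p ℓ := by simpa using hpos 0 hl0
  have hpq : 0 < p (ℓ-1) + p (2*ℓ-1) := by
    have h' := hpos (ℓ-1) (by omega)
    have h'' : ℓ - 1 + ℓ = 2*ℓ - 1 := by omega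
    rwa [h''] at h'
  have ha0 : 0 ≤ a := ENNReal.toReal_nonneg
  have hb0 : 0 ≤ b := ENNReal.toReal_nonneg
  have hab : a = 0 ∧ b = 0 := by
    rcases le_total a b with h | h
    · have hb : b = 0 := by
        have hble : b ≤ 0 := by
          nlinarith [mul_le_mul_of_nonneg_left h (hp (2*ℓ-1)),
            mul_le_mul_of_nonneg_right
              (show p (ℓ-1) + p (2*ℓ-1) ≤ 1 - (p 0 + p ℓ) by linarith) hb0]
        linarith
      have ha : a = 0 := by
        have h5 : a = p 0 * a := by
          calc a = p 0 * a + p ℓ * b := e0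
            _ = p 0 * a := by rw [hb]; ring
        have hale : a ≤ 0 := by
          nlinarith [mul_le_mul_of_nonneg_right
            (show p 0 ≤ 1 - (p (ℓ-1) + p (2*ℓ-1)) by
              linarith [hp ℓ, hp 0, hp (ℓ-1), hp (2*ℓ-1)]) ha0]
        linarith
      exact ⟨ha, hb⟩
    · have ha : a = 0 := by
        have hale : a ≤ 0 := by
          nlinarith [mul_le_mul_of_nonneg_left h (hp ℓ),
            mul_le_mul_of_nonneg_right
              (show p 0 + p ℓ ≤ 1 - (p (ℓ-1) + p (2*ℓ-1)) by linarith) ha0]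
        linarith
      have hb : b = 0 := by
        have h5 : b = p (ℓ-1) * b := by
          calc b = p (ℓ-1) * b + p (2*ℓ-1) * a := e1
            _ = p (ℓ-1) * b := by rw [ha]; ring
        have hble : b ≤ 0 := by
          nlinarith [mul_le_mul_of_nonneg_right
            (show p (ℓ-1) ≤ 1 - (p 0 + p ℓ) by
              linarith [hp ℓ, hp 0, hp (ℓ-1), hp (2*ℓ-1)]) hb0]
        linarith
      exact ⟨ha, hb⟩
  constructor
  · rw [← ENNReal.ofReal_toReal hfin0, ← hadef, hab.1, ENNReal.ofReal_zero]
  · rw [← ENNReal.ofReal_toReal hfin1, ← hbdef, hab.2, ENNReal.ofReal_zero]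

lemma null_out (hℓ : 2 ≤ ℓ) (hp : ∀ i, 0 ≤ p i)
    (hsum : ∑ i ∈ Finset.range (2 * ℓ), p i = 1)
    (hpos : ∀ i < ℓ, 0 < p i + p (i + ℓ))
    [IsProbabilityMeasure μ]
    (hself : μ = ∑ i ∈ Finset.range (2 * ℓ), ENNReal.ofReal (p i) • μ.map (simMapT ℓ i))
    {s : Set ℝ} (hs : s ⊆ {x : ℝ | x ≤ 0} ∪ {x | 1 ≤ x}) : μ s = 0 := by
  obtain ⟨h0, h1⟩ := atoms_null hℓ hp hsum hpos hself
  have hA : μ {x : ℝ | x ≤ 0} = 0 := by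
    refine measure_mono_null (show {x : ℝ | x ≤ 0} ⊆ {x : ℝ | x < 0} ∪ {(0:ℝ)} from ?_)
      (measure_union_null (null_lt0 hℓ hp hsum hself) h0)
    intro x hx
    have hx' : x ≤ 0 := hx
    rcases lt_or_eq_of_le hx' with h | h
    · exact Or.inl h
    · exact Or.inr h
  have hB : μ {x : ℝ | 1 ≤ x} = 0 := by
    refine measure_mono_null (show {x : ℝ | 1 ≤ x} ⊆ {(1:ℝ)} ∪ {x : ℝ | 1 < x} from ?_)
      (measure_union_null h1 (null_gt1 hℓ hp hsum hself))
    intro x hx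
    have hx' : (1:ℝ) ≤ x := hx
    rcases eq_or_lt_of_le hx' with h | h
    · exact Or.inl h.symm
    · exact Or.inr h
  exact measure_mono_null hs (measure_union_null hA hB)

lemma lemA (hℓ : 2 ≤ ℓ) (hp : ∀ i, 0 ≤ p i)
    (hsum : ∑ i ∈ Finset.range (2 * ℓ), p i = 1)
    (hpos : ∀ i < ℓ, 0 < p i + p (i + ℓ))
    [IsProbabilityMeasure μ]
    (hself : μ = ∑ i ∈ Finset.range (2 * ℓ), ENNReal.ofReal (p i) • μ.map (simMapT ℓ i))
    {J : Set ℝ} (hJm : MeasurableSet J) (hJ : J ⊆ Set.Icc 0 1) {ε : ℕ} (hε : ε < ℓ) :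
    μ ((fun x : ℝ => (ℓ:ℝ) * x - ε) ⁻¹' J)
      = ENNReal.ofReal (p ε) * μ J + ENNReal.ofReal (p (ε + ℓ)) * μ (refl1 ⁻¹' J) := by
  have hl0 : (0:ℝ) < ℓ := by exact_mod_cast (by omega : 0 < ℓ)
  have hne : (ℓ:ℝ) ≠ 0 := ne_of_gt hl0
  have hgm : Measurable fun x : ℝ => (ℓ:ℝ) * x - (ε:ℝ) := by fun_prop
  have hsubP : ({ε, ε+ℓ} : Finset ℕ) ⊆ Finset.range (2*ℓ) := by
    intro x hx
    simp only [Finset.mem_insert, Finset.mem_singleton] at hx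
    rcases hx with rfl | rfl <;> exact Finset.mem_range.2 (by omega)
  have hz : ∀ i ∈ Finset.range (2*ℓ), i ∉ ({ε, ε+ℓ} : Finset ℕ) →
      ENNReal.ofReal (p i) * μ (simMapT ℓ i ⁻¹' ((fun x:ℝ => (ℓ:ℝ)*x - ε) ⁻¹' J)) = 0 := by
    intro i hi hnot
    simp only [Finset.mem_insert, Finset.mem_singleton, not_or] at hnot
    rw [Finset.mem_range] at hi
    refine mul_eq_zero_of_right _ (null_out hℓ hp hsum hpos hself ?_)
    intro x hx
    simp only [Set.mem_preimage] at hx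
    simp only [Set.mem_union, Set.mem_setOf_eq]
    by_cases hiℓ : i < ℓ
    · have hval : (ℓ:ℝ) * simMapT ℓ i x - ε = x + i - ε := by
        simp only [simMapT, if_pos hiℓ]
        field_simp
      rw [hval] at hx
      obtain ⟨hj0, hj1⟩ := hJ hx
      rcases Nat.lt_or_ge i ε with hlt | hge
      · right
        have : (i:ℝ) + 1 ≤ ε := by exact_mod_cast hlt
        linarith
      · left
        have hgt : ε + 1 ≤ i := by omega
        have : (ε:ℝ) + 1 ≤ i := by exact_mod_cast hgt
        linarith
    · have h2 : ℓ ≤ i := by omega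
      have hval : (ℓ:ℝ) * simMapT ℓ i x - ε = -x + ((i:ℝ) - ℓ + 1) - ε := by
        simp only [simMapT, if_neg hiℓ]
        have hc : ((i - ℓ + 1 : ℕ):ℝ) = (i:ℝ) - ℓ + 1 := by push_cast [h2]; ring
        rw [hc]
        field_simp
      rw [hval] at hx
      obtain ⟨hj0, hj1⟩ := hJ hx
      rcases Nat.lt_or_ge i (ε + ℓ) with hlt | hge
      · left
        have : (i:ℝ) + 1 ≤ ε + ℓ := by exact_mod_cast hlt
        linarith
      · right
        have hgt : ε + ℓ + 1 ≤ i := by omega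
        have : (ε:ℝ) + ℓ + 1 ≤ i := by exact_mod_cast hgt
        linarith
  have r1 : simMapT ℓ ε ⁻¹' ((fun x:ℝ => (ℓ:ℝ)*x - ε) ⁻¹' J) = J := by
    rw [← Set.preimage_comp]
    have hco : ((fun x:ℝ => (ℓ:ℝ)*x - ε) ∘ simMapT ℓ ε) = id := by
      funext x
      simp only [Function.comp_apply, simMapT, if_pos hε, id_eq]
      field_simp
      ring
    rw [hco, Set.preimage_id]
  have r2 : simMapT ℓ (ε+ℓ) ⁻¹' ((fun x:ℝ => (ℓ:ℝ)*x - ε) ⁻¹' J) = refl1 ⁻¹' J := by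
    rw [← Set.preimage_comp]
    have hco : ((fun x:ℝ => (ℓ:ℝ)*x - ε) ∘ simMapT ℓ (ε+ℓ)) = refl1 := by
      funext x
      simp only [Function.comp_apply, simMapT, if_neg (by omega : ¬ (ε + ℓ < ℓ)), refl1]
      rw [show (ε + ℓ - ℓ + 1 : ℕ) = ε + 1 by omega]
      push_cast
      field_simp
      ring
    rw [hco]
  have hmain := self_eq hself (hgm hJm)
  rw [← Finset.sum_subset hsubP hz, Finset.sum_pair (show ε ≠ ε + ℓ by omega), r1, r2] at hmain
  exact hmain

lemma lemA2 (hℓ : 2 ≤ ℓ) (hp : ∀ i, 0 ≤ p i)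
    (hsum : ∑ i ∈ Finset.range (2 * ℓ), p i = 1)
    (hpos : ∀ i < ℓ, 0 < p i + p (i + ℓ))
    [IsProbabilityMeasure μ]
    (hself : μ = ∑ i ∈ Finset.range (2 * ℓ), ENNReal.ofReal (p i) • μ.map (simMapT ℓ i))
    {J : Set ℝ} (hJm : MeasurableSet J) (hJ : J ⊆ Set.Icc 0 1) {ε : ℕ} (hε : ε < ℓ) :
    μ (refl1 ⁻¹' ((fun x : ℝ => (ℓ:ℝ) * x - ε) ⁻¹' J))
      = ENNReal.ofReal (p (2*ℓ - 1 - ε)) * μ J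
        + ENNReal.ofReal (p (ℓ - 1 - ε)) * μ (refl1 ⁻¹' J) := by
  have hc : ((ℓ - 1 - ε : ℕ):ℝ) = (ℓ:ℝ) - 1 - ε := by
    have h1 : (ℓ - 1 - ε : ℕ) = ℓ - (1 + ε) := by omega
    rw [h1, Nat.cast_sub (by omega : 1 + ε ≤ ℓ)]
    push_cast
    ring
  have hset : refl1 ⁻¹' ((fun x : ℝ => (ℓ:ℝ) * x - ε) ⁻¹' J)
      = (fun x : ℝ => (ℓ:ℝ) * x - ((ℓ - 1 - ε : ℕ):ℝ)) ⁻¹' (refl1 ⁻¹' J) := by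
    ext x
    simp only [Set.mem_preimage, refl1]
    have harg : (ℓ:ℝ) * (1 - x) - ε = 1 - ((ℓ:ℝ) * x - ((ℓ - 1 - ε : ℕ):ℝ)) := by
      rw [hc]; ring
    rw [harg]
  have hJ' : refl1 ⁻¹' J ⊆ Set.Icc 0 1 := by
    intro x hx
    obtain ⟨h1, h2⟩ := hJ hx
    simp only [refl1] at h1 h2
    exact ⟨by linarith, by linarith⟩
  have hinv : refl1 ⁻¹' (refl1 ⁻¹' J) = J := by
    ext x
    simp only [Set.mem_preimage, refl1]
    rw [show (1:ℝ) - (1 - x) = x by ring]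
  rw [hset, lemA hℓ hp hsum hpos hself (measurable_refl1 hJm) hJ' (show ℓ - 1 - ε < ℓ by omega),
    show (ℓ - 1 - ε) + ℓ = 2*ℓ - 1 - ε by omega, hinv, add_comm]

lemma sum_shift (ℓ n : ℕ) (ε : Fin (n+1) → ℕ) :
    (∑ i : Fin (n+1), (ε i : ℝ)/ (ℓ:ℝ)^((i:ℕ)+1))
      = (ε 0 : ℝ)/ℓ + (∑ i : Fin n, (ε i.succ : ℝ)/(ℓ:ℝ)^((i:ℕ)+1))/ℓ := by
  rw [Fin.sum_univ_succ, Finset.sum_div]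
  congr 1
  · norm_num
  · refine Finset.sum_congr rfl fun i _ => ?_
    rw [Fin.val_succ, pow_succ, ← div_div]

lemma wordI_zero (ℓ : ℕ) (ε : Fin 0 → ℕ) : wordI ℓ 0 ε = Set.Ico (0:ℝ) 1 := by
  unfold wordI
  simp

lemma wordI_succ {ℓ : ℕ} (hl0 : 0 < ℓ) (n : ℕ) (ε : Fin (n+1) → ℕ) :
    wordI ℓ (n+1) ε = (fun x : ℝ => (ℓ:ℝ) * x - (ε 0 : ℝ)) ⁻¹' wordI ℓ n (fun i => ε i.succ) := by
  have hlR : (0:ℝ) < ℓ := by exact_mod_cast hl0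
  have hne : (ℓ:ℝ) ≠ 0 := ne_of_gt hlR
  ext x
  simp only [wordI, Set.mem_preimage, Set.mem_Ico, sum_shift]
  set S := ∑ i : Fin n, (ε i.succ : ℝ)/(ℓ:ℝ)^((i:ℕ)+1) with hS
  have key : ∀ a : ℝ, a/(ℓ:ℝ) ≤ x ↔ a ≤ (ℓ:ℝ)*x := by
    intro a
    rw [div_le_iff₀ hlR]
    constructor <;> intro h <;> nlinarith [h]
  have key2 : ∀ a : ℝ, x < a/(ℓ:ℝ) ↔ (ℓ:ℝ)*x < a := by
    intro a
    rw [lt_div_iff₀ hlR]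
    constructor <;> intro h <;> nlinarith [h]
  have eA : (ε 0 : ℝ)/(ℓ:ℝ) + S/(ℓ:ℝ) = ((ε 0:ℝ) + S)/(ℓ:ℝ) := by rw [← add_div]
  have eB : (ε 0 : ℝ)/(ℓ:ℝ) + S/(ℓ:ℝ) + 1/(ℓ:ℝ)^(n+1) = ((ε 0:ℝ) + S + 1/(ℓ:ℝ)^n)/(ℓ:ℝ) := by
    rw [pow_succ]
    field_simp
  rw [eB, eA, key, key2]
  constructor <;> rintro ⟨h1, h2⟩ <;> exact ⟨by linarith, by linarith⟩

lemma wordI_sum_le {ℓ : ℕ} (hl0 : 0 < ℓ) :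
    ∀ (n : ℕ) (ε : Fin n → ℕ), (∀ i, ε i < ℓ) →
      (∑ i : Fin n, (ε i : ℝ)/(ℓ:ℝ)^((i:ℕ)+1)) + 1/(ℓ:ℝ)^n ≤ 1 := by
  have hlR : (0:ℝ) < ℓ := by exact_mod_cast hl0
  intro n
  induction n with
  | zero => intro ε hε; norm_num
  | succ n ih =>
    intro ε hε
    rw [sum_shift]
    have IH := ih (fun i => ε i.succ) (fun i => hε i.succ)
    set S := ∑ i : Fin n, (ε i.succ : ℝ)/(ℓ:ℝ)^((i:ℕ)+1) with hS
    have hε0 : (ε 0 : ℝ) + 1 ≤ ℓ := by exact_mod_cast hε 0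
    have eB : (ε 0 : ℝ)/(ℓ:ℝ) + S/(ℓ:ℝ) + 1/(ℓ:ℝ)^(n+1) = ((ε 0:ℝ) + S + 1/(ℓ:ℝ)^n)/(ℓ:ℝ) := by
      rw [pow_succ]
      field_simp
    rw [eB, div_le_one hlR]
    linarith

lemma wordI_subset {ℓ : ℕ} (hl0 : 0 < ℓ) (n : ℕ) (ε : Fin n → ℕ) (hε : ∀ i, ε i < ℓ) :
    wordI ℓ n ε ⊆ Set.Icc 0 1 := by
  intro x hx
  obtain ⟨h1, h2⟩ := hx
  have hnn : (0:ℝ) ≤ ∑ i : Fin n, (ε i : ℝ)/(ℓ:ℝ)^((i:ℕ)+1) := by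
    refine Finset.sum_nonneg fun i _ => by positivity
  have := wordI_sum_le hl0 n ε hε
  exact ⟨by linarith, by linarith⟩

lemma Mm00 : MmatT ℓ p ε' 0 0 = p ε' := by simp [MmatT]
lemma Mm01 : MmatT ℓ p ε' 0 1 = p (ε' + ℓ) := by simp [MmatT]
lemma Mm10 : MmatT ℓ p ε' 1 0 = p (2*ℓ - 1 - ε') := by simp [MmatT]
lemma Mm11 : MmatT ℓ p ε' 1 1 = p (ℓ - 1 - ε') := by simp [MmatT]

lemma rows_mul (A B : Matrix (Fin 2) (Fin 2) ℝ) :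
    (A * B) 0 0 + (A * B) 0 1 = A 0 0 * (B 0 0 + B 0 1) + A 0 1 * (B 1 0 + B 1 1) ∧
    (A * B) 1 0 + (A * B) 1 1 = A 1 0 * (B 0 0 + B 0 1) + A 1 1 * (B 1 0 + B 1 1) := by
  constructor <;> simp [Matrix.mul_apply, Fin.sum_univ_two] <;> ring

lemma prodM_nonneg : ∀ (L : List (Matrix (Fin 2) (Fin 2) ℝ)),
    (∀ M ∈ L, ∀ i j, 0 ≤ M i j) → ∀ i j, 0 ≤ L.prod i j := by
  intro L
  induction L with
  | nil =>
    intro _ i j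
    rw [List.prod_nil, Matrix.one_apply]
    split_ifs <;> norm_num
  | cons M L ih =>
    intro h i j
    rw [List.prod_cons, Matrix.mul_apply]
    exact Finset.sum_nonneg fun k _ =>
      mul_nonneg (h M List.mem_cons_self i k)
        (ih (fun N hN => h N (List.mem_cons_of_mem _ hN)) k j)

lemma Mmat_nonneg (hp : ∀ i, 0 ≤ p i) (e : ℕ) : ∀ i j, 0 ≤ MmatT ℓ p e i j := by
  intro i j
  fin_cases i <;> fin_cases j <;> simpa [MmatT] using hp _

lemma prodMmat_nonneg (hp : ∀ i, 0 ≤ p i) (n : ℕ) (ε : Fin n → ℕ) :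
    ∀ i j, 0 ≤ ((List.ofFn fun i => MmatT ℓ p (ε i)).prod) i j := by
  refine prodM_nonneg _ ?_
  intro M hM
  simp only [List.mem_ofFn] at hM
  obtain ⟨k, rfl⟩ := hM
  exact Mmat_nonneg hp _

lemma keyInd (hℓ : 2 ≤ ℓ) (hp : ∀ i, 0 ≤ p i)
    (hsum : ∑ i ∈ Finset.range (2 * ℓ), p i = 1)
    (hpos : ∀ i < ℓ, 0 < p i + p (i + ℓ))
    [IsProbabilityMeasure μ]
    (hself : μ = ∑ i ∈ Finset.range (2 * ℓ), ENNReal.ofReal (p i) • μ.map (simMapT ℓ i)) :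
    ∀ (n : ℕ) (ε : Fin n → ℕ), (∀ i, ε i < ℓ) →
      μ (wordI ℓ n ε) = ENNReal.ofReal
          (((List.ofFn fun i => MmatT ℓ p (ε i)).prod) 0 0
            + ((List.ofFn fun i => MmatT ℓ p (ε i)).prod) 0 1)
      ∧ μ (refl1 ⁻¹' wordI ℓ n ε) = ENNReal.ofReal
          (((List.ofFn fun i => MmatT ℓ p (ε i)).prod) 1 0
            + ((List.ofFn fun i => MmatT ℓ p (ε i)).prod) 1 1) := by
  intro n
  induction n with
  | zero =>
    intro ε hε
    rw [wordI_zero]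
    have hIco : μ (Set.Ico (0:ℝ) 1) = 1 := by
      refine (prob_compl_eq_zero_iff measurableSet_Ico).1 ?_
      refine null_out hℓ hp hsum hpos hself ?_
      intro x hx
      simp only [Set.mem_compl_iff, Set.mem_Ico, not_and_or, not_le, not_lt] at hx
      simp only [Set.mem_union, Set.mem_setOf_eq]
      rcases hx with h | h
      · exact Or.inl (le_of_lt h)
      · exact Or.inr h
    have hIoc : μ (refl1 ⁻¹' Set.Ico (0:ℝ) 1) = 1 := by
      have hre : refl1 ⁻¹' Set.Ico (0:ℝ) 1 = Set.Ioc 0 1 := by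
        ext x
        simp only [Set.mem_preimage, Set.mem_Ico, Set.mem_Ioc, refl1]
        constructor <;> rintro ⟨h1, h2⟩ <;> exact ⟨by linarith, by linarith⟩
      rw [hre]
      refine (prob_compl_eq_zero_iff measurableSet_Ioc).1 ?_
      refine null_out hℓ hp hsum hpos hself ?_
      intro x hx
      simp only [Set.mem_compl_iff, Set.mem_Ioc, not_and_or, not_le, not_lt] at hx
      simp only [Set.mem_union, Set.mem_setOf_eq]
      rcases hx with h | h
      · exact Or.inl h
      · exact Or.inr (le_of_lt h)
    have hmat : (List.ofFn fun i : Fin 0 => MmatT ℓ p (ε i)).prod = 1 := by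
      simp
    constructor
    · rw [hIco, hmat]
      simp [Matrix.one_apply]
    · rw [hIoc, hmat]
      simp [Matrix.one_apply]
  | succ n ih =>
    intro ε hε
    set B := (List.ofFn fun i : Fin n => MmatT ℓ p (ε i.succ)).prod with hB
    have hBnn : ∀ i j, 0 ≤ B i j := prodMmat_nonneg hp n _
    obtain ⟨ih1, ih2⟩ := ih (fun i => ε i.succ) (fun i => hε i.succ)
    have hW : wordI ℓ (n+1) ε
        = (fun x : ℝ => (ℓ:ℝ) * x - (ε 0 : ℝ)) ⁻¹' wordI ℓ n (fun i => ε i.succ) :=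
      wordI_succ (by omega) n ε
    have hWm : MeasurableSet (wordI ℓ n fun i => ε i.succ) := measurableSet_Ico
    have hWs : wordI ℓ n (fun i => ε i.succ) ⊆ Set.Icc 0 1 :=
      wordI_subset (by omega) n _ (fun i => hε i.succ)
    have hA := lemA hℓ hp hsum hpos hself hWm hWs (hε 0)
    have hA2 := lemA2 hℓ hp hsum hpos hself hWm hWs (hε 0)
    have hprod : (List.ofFn fun i : Fin (n+1) => MmatT ℓ p (ε i)).prod = MmatT ℓ p (ε 0) * B := by
      rw [List.ofFn_succ, List.prod_cons]
    have hnn1 : 0 ≤ B 0 0 + B 0 1 := add_nonneg (hBnn 0 0) (hBnn 0 1)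
    have hnn2 : 0 ≤ B 1 0 + B 1 1 := add_nonneg (hBnn 1 0) (hBnn 1 1)
    constructor
    · rw [hW, hA, ih1, ih2, hprod]
      rw [← ENNReal.ofReal_mul (hp (ε 0)), ← ENNReal.ofReal_mul (hp (ε 0 + ℓ)),
        ← ENNReal.ofReal_add (mul_nonneg (hp _) hnn1) (mul_nonneg (hp _) hnn2)]
      congr 1
      rw [(rows_mul (MmatT ℓ p (ε 0)) B).1, Mm00, Mm01]
    · rw [hW, hA2, ih1, ih2, hprod]
      rw [← ENNReal.ofReal_mul (hp (2*ℓ - 1 - ε 0)), ← ENNReal.ofReal_mul (hp (ℓ - 1 - ε 0)),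
        ← ENNReal.ofReal_add (mul_nonneg (hp _) hnn1) (mul_nonneg (hp _) hnn2)]
      congr 1
      rw [(rows_mul (MmatT ℓ p (ε 0)) B).2, Mm10, Mm11]

lemma measurableSet_wordI {ℓ n : ℕ} {ε : Fin n → ℕ} : MeasurableSet (wordI ℓ n ε) := by
  unfold wordI; exact measurableSet_Ico

lemma nuT_apply [IsProbabilityMeasure μ] {s : Set ℝ} (hs : MeasurableSet s) :
    nuT μ s = 2⁻¹ * (μ s + μ (refl1 ⁻¹' s)) := by
  rw [nuT, Measure.smul_apply, Measure.add_apply, Measure.map_apply measurable_refl1 hs,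
    smul_eq_mul]

lemma part1 (hℓ : 2 ≤ ℓ) (hp : ∀ i, 0 ≤ p i)
    (hsum : ∑ i ∈ Finset.range (2 * ℓ), p i = 1)
    (hpos : ∀ i < ℓ, 0 < p i + p (i + ℓ))
    [IsProbabilityMeasure μ]
    (hself : μ = ∑ i ∈ Finset.range (2 * ℓ), ENNReal.ofReal (p i) • μ.map (simMapT ℓ i))
    (n : ℕ) (ε : Fin n → ℕ) (hε : ∀ i, ε i < ℓ) :
    mss (nuT μ) (wordI ℓ n ε) = normH2 (List.ofFn (fun i => MmatT ℓ p (ε i))).prod := by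
  obtain ⟨h1, h2⟩ := keyInd hℓ hp hsum hpos hself n ε hε
  set A := (List.ofFn fun i => MmatT ℓ p (ε i)).prod with hA
  have hAnn : ∀ i j, 0 ≤ A i j := prodMmat_nonneg hp n ε
  have hnn1 : 0 ≤ A 0 0 + A 0 1 := add_nonneg (hAnn 0 0) (hAnn 0 1)
  have hnn2 : 0 ≤ A 1 0 + A 1 1 := add_nonneg (hAnn 1 0) (hAnn 1 1)
  rw [mss, nuT_apply measurableSet_wordI, h1, h2, ← ENNReal.ofReal_add hnn1 hnn2,
    ENNReal.toReal_mul, ENNReal.toReal_ofReal (by linarith)]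
  have h2inv : ((2:ℝ≥0∞)⁻¹).toReal = (2:ℝ)⁻¹ := by
    rw [ENNReal.toReal_inv]
    norm_num
  rw [h2inv, normH2]
  ring

def digT (ℓ n k : ℕ) (i : Fin n) : ℕ := k / ℓ^(n - 1 - (i:ℕ)) % ℓ

lemma digT_lt {ℓ n k : ℕ} (hl0 : 0 < ℓ) (i : Fin n) : digT ℓ n k i < ℓ :=
  Nat.mod_lt _ hl0

lemma div_pow_mod {ℓ : ℕ} (hl0 : 0 < ℓ) (a b : ℕ) {e E : ℕ} (hE : e < E) :
    (a * ℓ^E + b) / ℓ^e % ℓ = b / ℓ^e % ℓ := by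
  have h1 : a * ℓ^E = (a * ℓ^(E - e)) * ℓ^e := by
    rw [mul_assoc, ← pow_add]
    congr 2
    omega
  rw [add_comm, h1, Nat.add_mul_div_right _ _ (pow_pos hl0 e)]
  have h2 : a * ℓ^(E - e) = (a * ℓ^(E - e - 1)) * ℓ := by
    rw [mul_assoc, ← pow_succ]
    congr 2
    omega
  rw [h2, Nat.add_mul_mod_self_right]

lemma digT_cast {ℓ n m k j : ℕ} (hl0 : 0 < ℓ) (hj : j < ℓ^m) (i : Fin n) :
    digT ℓ (n+m) (k * ℓ^m + j) (Fin.castAdd m i) = digT ℓ n k i := by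
  unfold digT
  rw [Fin.coe_castAdd]
  have he : n + m - 1 - (i:ℕ) = (n - 1 - (i:ℕ)) + m := by
    have := i.isLt
    omega
  rw [he, pow_add, mul_comm ((ℓ:ℕ)^(n-1-(i:ℕ))) (ℓ^m), ← Nat.div_div_eq_div_mul]
  have hq : (k * ℓ^m + j) / ℓ^m = k := by
    rw [add_comm, Nat.add_mul_div_right _ _ (pow_pos hl0 m), Nat.div_eq_of_lt hj, zero_add]
  rw [hq]

lemma digT_nat {ℓ n m k j : ℕ} (hl0 : 0 < ℓ) (hj : j < ℓ^m) (i : Fin m) :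
    digT ℓ (n+m) (k * ℓ^m + j) (Fin.natAdd n i) = digT ℓ m j i := by
  unfold digT
  rw [Fin.coe_natAdd]
  have he : n + m - 1 - (n + (i:ℕ)) = m - 1 - (i:ℕ) := by omega
  rw [he]
  exact div_pow_mod hl0 k j (by have := i.isLt; omega : m - 1 - (i:ℕ) < m)

lemma digT_expand {ℓ : ℕ} (hl0 : 0 < ℓ) :
    ∀ n k, k < ℓ^n →
      (∑ i : Fin n, (digT ℓ n k i : ℝ)/(ℓ:ℝ)^((i:ℕ)+1)) = (k:ℝ) / (ℓ:ℝ)^n := by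
  have hlR : (0:ℝ) < ℓ := by exact_mod_cast hl0
  have hne : (ℓ:ℝ) ≠ 0 := ne_of_gt hlR
  intro n
  induction n with
  | zero =>
    intro k hk
    have h1 : ℓ^0 = 1 := pow_zero ℓ
    have : k = 0 := by omega
    subst this
    simp
  | succ n ih =>
    intro k hk
    have hd0 : digT ℓ (n+1) k 0 = k / ℓ^n := by
      unfold digT
      have h1 : (n + 1 - 1 - ((0 : Fin (n+1)):ℕ)) = n := by simp
      rw [h1]
      refine Nat.mod_eq_of_lt ?_
      refine (Nat.div_lt_iff_lt_mul (pow_pos hl0 n)).2 ?_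
      calc k < ℓ^(n+1) := hk
        _ = ℓ * ℓ^n := by rw [pow_succ]; ring
    have hdt : ∀ i : Fin n, digT ℓ (n+1) k i.succ = digT ℓ n (k % ℓ^n) i := by
      intro i
      unfold digT
      have he : (n + 1 - 1 - ((i.succ : Fin (n+1)):ℕ)) = n - 1 - (i:ℕ) := by
        rw [Fin.val_succ]
        omega
      rw [he]
      have hk' : k = (k / ℓ^n) * ℓ^n + k % ℓ^n := by
        rw [mul_comm]
        exact (Nat.div_add_mod k (ℓ^n)).symm
      conv_lhs => rw [hk']
      exact div_pow_mod hl0 _ _ (by have := i.isLt; omega : n - 1 - (i:ℕ) < n)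
    rw [Fin.sum_univ_succ]
    have hrw : ∀ i : Fin n, (digT ℓ (n+1) k i.succ : ℝ)/(ℓ:ℝ)^(((i.succ : Fin (n+1)):ℕ)+1)
        = ((digT ℓ n (k % ℓ^n) i : ℝ)/(ℓ:ℝ)^((i:ℕ)+1))/ℓ := by
      intro i
      rw [hdt i, Fin.val_succ, pow_succ, ← div_div]
    rw [Finset.sum_congr rfl (fun i _ => hrw i), ← Finset.sum_div,
      ih (k % ℓ^n) (Nat.mod_lt _ (pow_pos hl0 n)), hd0]
    have hk' : (k : ℝ) = (ℓ:ℝ)^n * ((k / ℓ^n : ℕ):ℝ) + ((k % ℓ^n : ℕ):ℝ) := by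
      exact_mod_cast congrArg (Nat.cast : ℕ → ℝ) (Nat.div_add_mod k (ℓ^n)).symm
    rw [hk']
    simp only [Fin.val_zero, zero_add, pow_one]
    field_simp
    ring

lemma adic_eq_word {ℓ : ℕ} (hl0 : 0 < ℓ) (n k : ℕ) (hk : k < ℓ^n) :
    adicI ℓ n k = wordI ℓ n (digT ℓ n k) := by
  unfold adicI wordI
  rw [digT_expand hl0 n k hk, add_div]

lemma massEq (hℓ : 2 ≤ ℓ) (hp : ∀ i, 0 ≤ p i)
    (hsum : ∑ i ∈ Finset.range (2 * ℓ), p i = 1)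
    (hpos : ∀ i < ℓ, 0 < p i + p (i + ℓ))
    [IsProbabilityMeasure μ]
    (hself : μ = ∑ i ∈ Finset.range (2 * ℓ), ENNReal.ofReal (p i) • μ.map (simMapT ℓ i))
    (n k : ℕ) (hk : k < ℓ^n) :
    mss (nuT μ) (adicI ℓ n k)
      = normH2 (List.ofFn fun i => MmatT ℓ p (digT ℓ n k i)).prod := by
  rw [adic_eq_word (by omega) n k hk]
  exact part1 hℓ hp hsum hpos hself n _ (fun i => digT_lt (by omega) i)

lemma normH2_mul_le {A B : Matrix (Fin 2) (Fin 2) ℝ} (hA : ∀ i j, 0 ≤ A i j)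
    (hB : ∀ i j, 0 ≤ B i j) : normH2 (A * B) ≤ 2 * normH2 A * normH2 B := by
  have e := rows_mul A B
  unfold normH2
  rw [show (A*B) 0 0 + (A*B) 0 1 + (A*B) 1 0 + (A*B) 1 1
      = ((A*B) 0 0 + (A*B) 0 1) + ((A*B) 1 0 + (A*B) 1 1) by ring, e.1, e.2]
  nlinarith [mul_nonneg (add_nonneg (hA 0 0) (hA 1 0)) (add_nonneg (hB 1 0) (hB 1 1)),
    mul_nonneg (add_nonneg (hA 0 1) (hA 1 1)) (add_nonneg (hB 0 0) (hB 0 1))]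

lemma prod_row_ge (hp : ∀ i, 0 ≤ p i) {δ : ℝ} (hδ : 0 ≤ δ)
    (hδle : ∀ e, e < ℓ → δ ≤ p e + p (e + ℓ) ∧ δ ≤ p (2*ℓ - 1 - e) + p (ℓ - 1 - e)) :
    ∀ (n : ℕ) (ε : Fin n → ℕ), (∀ i, ε i < ℓ) →
      δ^n ≤ ((List.ofFn fun i => MmatT ℓ p (ε i)).prod) 0 0
              + ((List.ofFn fun i => MmatT ℓ p (ε i)).prod) 0 1
      ∧ δ^n ≤ ((List.ofFn fun i => MmatT ℓ p (ε i)).prod) 1 0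
              + ((List.ofFn fun i => MmatT ℓ p (ε i)).prod) 1 1 := by
  intro n
  induction n with
  | zero =>
    intro ε hε
    constructor <;> simp [Matrix.one_apply]
  | succ n ih =>
    intro ε hε
    obtain ⟨ih1, ih2⟩ := ih (fun i => ε i.succ) (fun i => hε i.succ)
    set B := (List.ofFn fun i : Fin n => MmatT ℓ p (ε i.succ)).prod with hB
    have hBnn : ∀ i j, 0 ≤ B i j := prodMmat_nonneg hp n _
    have hprod : (List.ofFn fun i : Fin (n+1) => MmatT ℓ p (ε i)).prod
        = MmatT ℓ p (ε 0) * B := by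
      rw [List.ofFn_succ, List.prod_cons]
    have e := rows_mul (MmatT ℓ p (ε 0)) B
    have hpow : δ^(n+1) = δ * δ^n := by rw [pow_succ]; ring
    have hδn : (0:ℝ) ≤ δ^n := pow_nonneg hδ n
    obtain ⟨hc1, hc2⟩ := hδle (ε 0) (hε 0)
    constructor
    · rw [hprod, e.1, Mm00, Mm01]
      nlinarith [mul_le_mul_of_nonneg_left ih1 (hp (ε 0)),
        mul_le_mul_of_nonneg_left ih2 (hp (ε 0 + ℓ)),
        mul_le_mul_of_nonneg_right hc1 hδn]
    · rw [hprod, e.2, Mm10, Mm11]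
      nlinarith [mul_le_mul_of_nonneg_left ih1 (hp (2*ℓ - 1 - ε 0)),
        mul_le_mul_of_nonneg_left ih2 (hp (ℓ - 1 - ε 0)),
        mul_le_mul_of_nonneg_right hc2 hδn]

lemma part2lem (hℓ : 2 ≤ ℓ) (hp : ∀ i, 0 ≤ p i)
    (hsum : ∑ i ∈ Finset.range (2 * ℓ), p i = 1)
    (hpos : ∀ i < ℓ, 0 < p i + p (i + ℓ))
    [IsProbabilityMeasure μ]
    (hself : μ = ∑ i ∈ Finset.range (2 * ℓ), ENNReal.ofReal (p i) • μ.map (simMapT ℓ i))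
    (n m k j : ℕ) (hk : k < ℓ^n) (hj : j < ℓ^m) :
    mss (nuT μ) (adicI ℓ (n + m) (k * ℓ^m + j)) ≤
      2 * mss (nuT μ) (adicI ℓ n k) * mss (nuT μ) (adicI ℓ m j) := by
  have hl0 : 0 < ℓ := by omega
  have hK : k * ℓ^m + j < ℓ^(n+m) := by
    calc k * ℓ^m + j < k * ℓ^m + ℓ^m := by omega
      _ = (k+1) * ℓ^m := by ring
      _ ≤ ℓ^n * ℓ^m := Nat.mul_le_mul_right _ hk
      _ = ℓ^(n+m) := (pow_add ℓ n m).symm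
  rw [massEq hℓ hp hsum hpos hself (n+m) _ hK, massEq hℓ hp hsum hpos hself n k hk,
    massEq hℓ hp hsum hpos hself m j hj]
  have hsplit : (List.ofFn fun i : Fin (n+m) => MmatT ℓ p (digT ℓ (n+m) (k * ℓ^m + j) i)).prod
      = (List.ofFn fun i : Fin n => MmatT ℓ p (digT ℓ n k i)).prod
        * (List.ofFn fun i : Fin m => MmatT ℓ p (digT ℓ m j i)).prod := by
    rw [List.ofFn_add, List.prod_append]
    congr 1
    · exact congrArg List.prod (congrArg List.ofFn (funext fun i => by rw [← digT_cast hl0 hj i]; rfl))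
    · exact congrArg List.prod (congrArg List.ofFn (funext fun i => by rw [digT_nat hl0 hj i]))
  rw [hsplit]
  exact normH2_mul_le (prodMmat_nonneg hp n _) (prodMmat_nonneg hp m _)

lemma part3 (hℓ : 2 ≤ ℓ) (hp : ∀ i, 0 ≤ p i)
    (hsum : ∑ i ∈ Finset.range (2 * ℓ), p i = 1)
    (hpos : ∀ i < ℓ, 0 < p i + p (i + ℓ))
    [IsProbabilityMeasure μ]
    (hself : μ = ∑ i ∈ Finset.range (2 * ℓ), ENNReal.ofReal (p i) • μ.map (simMapT ℓ i))
    (q : ℝ) :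
    ∃ L : ℝ, Tendsto (fun n : ℕ => uSeq ℓ (nuT μ) q n ^ ((1 : ℝ) / n)) atTop (𝓝 L) := by
  have hl0 : 0 < ℓ := by omega
  have hnn : ∀ s : Set ℝ, 0 ≤ mss (nuT μ) s := fun s => by
    unfold mss; exact ENNReal.toReal_nonneg
  obtain ⟨δ, hδpos, hδle⟩ : ∃ δ : ℝ, 0 < δ ∧ ∀ e, e < ℓ → δ ≤ p e + p (e + ℓ) := by
    refine ⟨(Finset.range ℓ).inf' (Finset.nonempty_range_iff.2 (by omega)) (fun e => p e + p (e + ℓ)), ?_, ?_⟩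
    · rw [Finset.lt_inf'_iff]
      exact fun e he => hpos e (Finset.mem_range.1 he)
    · exact fun e he => Finset.inf'_le _ (Finset.mem_range.2 he)
  have hδle2 : ∀ e, e < ℓ → δ ≤ p e + p (e + ℓ) ∧ δ ≤ p (2*ℓ - 1 - e) + p (ℓ - 1 - e) := by
    intro e he
    refine ⟨hδle e he, ?_⟩
    have h := hδle (ℓ - 1 - e) (by omega)
    rwa [show ℓ - 1 - e + ℓ = 2*ℓ - 1 - e by omega, add_comm] at h
  have hδn : ∀ n : ℕ, (0:ℝ) < δ^n := fun n => pow_pos hδpos n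
  have hmass : ∀ n k, k < ℓ^n → δ^n ≤ mss (nuT μ) (adicI ℓ n k) := by
    intro n k hk
    rw [massEq hℓ hp hsum hpos hself n k hk]
    obtain ⟨hr1, hr2⟩ := prod_row_ge hp hδpos.le hδle2 n (digT ℓ n k) (fun i => digT_lt hl0 i)
    unfold normH2
    linarith
  have hmass0 : ∀ n k, k < ℓ^n → 0 < mss (nuT μ) (adicI ℓ n k) :=
    fun n k hk => lt_of_lt_of_le (hδn n) (hmass n k hk)
  set v : ℕ → ℝ := fun n => ∑ k ∈ Finset.range (ℓ^n), mss (nuT μ) (adicI ℓ n k) ^ q with hv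
  have hvn : ∀ n, v n = ∑ k ∈ Finset.range (ℓ^n), mss (nuT μ) (adicI ℓ n k) ^ q :=
    fun n => rfl
  have hueq : ∀ n, uSeq ℓ (nuT μ) q n = v n := by
    intro n
    unfold uSeq
    rw [Finset.filter_true_of_mem]
    intro k hk
    exact ne_of_gt (hmass0 n k (Finset.mem_range.1 hk))
  have hvpos : ∀ n, 0 < v n := by
    intro n
    refine Finset.sum_pos
      (fun k hk => Real.rpow_pos_of_pos (hmass0 n k (Finset.mem_range.1 hk)) q) ?_
    exact ⟨0, Finset.mem_range.2 (pow_pos hl0 n)⟩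
  have hreidx : ∀ (n m : ℕ) (f : ℕ → ℝ),
      ∑ K ∈ Finset.range (ℓ^(n+m)), f K
        = ∑ k ∈ Finset.range (ℓ^n), ∑ j ∈ Finset.range (ℓ^m), f (k * ℓ^m + j) := by
    intro n m f
    have hsp := Finset.sum_product (Finset.range (ℓ^n)) (Finset.range (ℓ^m))
      (fun pr : ℕ × ℕ => f (pr.1 * ℓ^m + pr.2))
    rw [← hsp, pow_add]
    refine Finset.sum_nbij' (fun K => (K / ℓ^m, K % ℓ^m)) (fun a => a.1 * ℓ^m + a.2)
      ?_ ?_ ?_ ?_ ?_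
    · intro a ha
      rw [Finset.mem_range] at ha
      refine Finset.mem_product.2 ⟨Finset.mem_range.2 ?_,
        Finset.mem_range.2 (Nat.mod_lt _ (pow_pos hl0 m))⟩
      exact (Nat.div_lt_iff_lt_mul (pow_pos hl0 m)).2 ha
    · intro a ha
      obtain ⟨h1, h2⟩ := Finset.mem_product.1 ha
      rw [Finset.mem_range] at h1 h2
      refine Finset.mem_range.2 ?_
      calc a.1 * ℓ^m + a.2 < a.1 * ℓ^m + ℓ^m := by omega
        _ = (a.1+1) * ℓ^m := by ring
        _ ≤ ℓ^n * ℓ^m := Nat.mul_le_mul_right _ h1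
    · intro a _
      show (a / ℓ^m) * ℓ^m + a % ℓ^m = a
      rw [mul_comm]
      exact Nat.div_add_mod a _
    · intro a ha
      obtain ⟨h1, h2⟩ := Finset.mem_product.1 ha
      rw [Finset.mem_range] at h2
      have hd : (a.1 * ℓ^m + a.2)/ℓ^m = a.1 := by
        rw [add_comm, Nat.add_mul_div_right _ _ (pow_pos hl0 m), Nat.div_eq_of_lt h2, zero_add]
      have hm : (a.1 * ℓ^m + a.2) % ℓ^m = a.2 := by
        rw [add_comm, Nat.add_mul_mod_self_right]
        exact Nat.mod_eq_of_lt h2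
      show ((a.1 * ℓ^m + a.2) / ℓ^m, (a.1 * ℓ^m + a.2) % ℓ^m) = a
      exact Prod.ext hd hm
    · intro a _
      show f a = f ((a / ℓ^m) * ℓ^m + a % ℓ^m)
      congr 1
      rw [mul_comm]
      exact (Nat.div_add_mod a _).symm
  set c : ℝ := (2:ℝ) ^ q with hc
  have hcpos : 0 < c := Real.rpow_pos_of_pos two_pos q
  have hrw2 : ∀ n m k j, k < ℓ^n → j < ℓ^m →
      (2 * mss (nuT μ) (adicI ℓ n k) * mss (nuT μ) (adicI ℓ m j)) ^ q
        = c * mss (nuT μ) (adicI ℓ n k) ^ q * mss (nuT μ) (adicI ℓ m j) ^ q := by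
    intro n m k j hk hj
    rw [Real.mul_rpow (mul_nonneg (by norm_num) (hnn _)) (hnn _),
      Real.mul_rpow (by norm_num) (hnn _)]
  have hsumfact : ∀ (n m : ℕ),
      (∑ k ∈ Finset.range (ℓ^n), ∑ j ∈ Finset.range (ℓ^m),
        c * mss (nuT μ) (adicI ℓ n k) ^ q * mss (nuT μ) (adicI ℓ m j) ^ q)
      = c * v n * v m := by
    intro n m
    calc ∑ k ∈ Finset.range (ℓ^n), ∑ j ∈ Finset.range (ℓ^m),
          c * mss (nuT μ) (adicI ℓ n k) ^ q * mss (nuT μ) (adicI ℓ m j) ^ q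
        = ∑ k ∈ Finset.range (ℓ^n),
            (c * mss (nuT μ) (adicI ℓ n k) ^ q) * ∑ j ∈ Finset.range (ℓ^m),
              mss (nuT μ) (adicI ℓ m j) ^ q :=
          Finset.sum_congr rfl fun k _ => (Finset.mul_sum _ _ _).symm
      _ = c * v n * v m := by
          rw [← Finset.sum_mul, ← Finset.mul_sum]
  have main : ∃ L' : ℝ, Tendsto (fun n : ℕ => Real.log (v n) / n) atTop (𝓝 L') := by
    rcases le_or_gt 0 q with hq | hq
    · -- q ≥ 0 : subadditive
      have hsubm : ∀ n m, v (n+m) ≤ c * v n * v m := by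
        intro n m
        have hstep : v (n+m) ≤ ∑ k ∈ Finset.range (ℓ^n), ∑ j ∈ Finset.range (ℓ^m),
            c * mss (nuT μ) (adicI ℓ n k) ^ q * mss (nuT μ) (adicI ℓ m j) ^ q := by
          rw [hvn (n+m), hreidx n m]
          refine Finset.sum_le_sum fun k hk => Finset.sum_le_sum fun j hj => ?_
          rw [Finset.mem_range] at hk hj
          rw [← hrw2 n m k j hk hj]
          exact Real.rpow_le_rpow (hnn _) (part2lem hℓ hp hsum hpos hself n m k j hk hj) hq
        exact hstep.trans_eq (hsumfact n m)
      have hsubad : Subadditive (fun n => Real.log (c * v n)) := by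
        intro n m
        show Real.log (c * v (n+m)) ≤ Real.log (c * v n) + Real.log (c * v m)
        have h1 : c * v (n+m) ≤ (c * v n) * (c * v m) := by
          calc c * v (n+m) ≤ c * (c * v n * v m) :=
              mul_le_mul_of_nonneg_left (hsubm n m) hcpos.le
            _ = (c * v n) * (c * v m) := by ring
        show Real.log (c * v (n+m)) ≤ Real.log (c * v n) + Real.log (c * v m)
        calc Real.log (c * v (n+m)) ≤ Real.log ((c * v n) * (c * v m)) :=
            Real.log_le_log (mul_pos hcpos (hvpos _)) h1
          _ = _ := Real.log_mul (mul_pos hcpos (hvpos _)).ne' (mul_pos hcpos (hvpos _)).ne'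
      have hvlb : ∀ n : ℕ, (δ^n) ^ q ≤ v n := by
        intro n
        have h0 : (0:ℕ) ∈ Finset.range (ℓ^n) := Finset.mem_range.2 (pow_pos hl0 n)
        calc (δ^n)^q ≤ mss (nuT μ) (adicI ℓ n 0) ^ q :=
            Real.rpow_le_rpow (hδn n).le (hmass n 0 (pow_pos hl0 n)) hq
          _ ≤ v n := Finset.single_le_sum (fun k _ => Real.rpow_nonneg (hnn _) q) h0
      have hbdd : BddBelow (Set.range fun n : ℕ => Real.log (c * v n) / n) := by
        refine ⟨min 0 (q * Real.log δ), ?_⟩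
        rintro x ⟨n, rfl⟩
        rcases Nat.eq_zero_or_pos n with rfl | hn
        · refine le_trans (min_le_left _ _) (le_of_eq ?_)
          show (0:ℝ) = Real.log (c * v 0) / ((0:ℕ):ℝ)
          rw [Nat.cast_zero, _root_.div_zero]
        · have hnR : (0:ℝ) < n := by exact_mod_cast hn
          refine le_trans (min_le_right _ _) ?_
          show q * Real.log δ ≤ Real.log (c * v n) / (n:ℝ)
          rw [le_div_iff₀ hnR]
          have hlogv : q * ((n:ℝ) * Real.log δ) ≤ Real.log (v n) := by
            have h2 := Real.log_le_log (Real.rpow_pos_of_pos (hδn n) q) (hvlb n)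
            rwa [Real.log_rpow (hδn n), Real.log_pow] at h2
          have hlogc : 0 ≤ Real.log c := by
            rw [hc, Real.log_rpow two_pos]
            exact mul_nonneg hq (Real.log_nonneg one_le_two)
          rw [Real.log_mul (ne_of_gt hcpos) (ne_of_gt (hvpos n))]
          nlinarith [hlogv, hlogc]
      have hten := hsubad.tendsto_lim hbdd
      have hten2 := hten.sub (tendsto_const_div_atTop_nhds_zero_nat (Real.log c))
      refine ⟨hsubad.lim - 0, ?_⟩
      refine hten2.congr fun n => ?_
      rw [Real.log_mul (ne_of_gt hcpos) (ne_of_gt (hvpos n)), add_div]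
      ring
    · -- q < 0 : superadditive
      have hsupm : ∀ n m, c * v n * v m ≤ v (n+m) := by
        intro n m
        rw [← hsumfact n m, hvn (n+m), hreidx n m]
        refine Finset.sum_le_sum fun k hk => Finset.sum_le_sum fun j hj => ?_
        rw [Finset.mem_range] at hk hj
        rw [← hrw2 n m k j hk hj]
        have hK : k * ℓ^m + j < ℓ^(n+m) := by
          calc k * ℓ^m + j < k * ℓ^m + ℓ^m := by omega
            _ = (k+1) * ℓ^m := by ring
            _ ≤ ℓ^n * ℓ^m := Nat.mul_le_mul_right _ hk
            _ = ℓ^(n+m) := (pow_add ℓ n m).symm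
        exact Real.rpow_le_rpow_of_nonpos (hmass0 (n+m) _ hK)
          (part2lem hℓ hp hsum hpos hself n m k j hk hj) hq.le
      have hsubad : Subadditive (fun n => -Real.log (c * v n)) := by
        intro n m
        have h1 : (c * v n) * (c * v m) ≤ c * v (n+m) := by
          calc (c * v n) * (c * v m) = c * (c * v n * v m) := by ring
            _ ≤ c * v (n+m) := mul_le_mul_of_nonneg_left (hsupm n m) hcpos.le
        show -Real.log (c * v (n+m)) ≤ -Real.log (c * v n) + -Real.log (c * v m)
        have h2 : Real.log ((c * v n) * (c * v m)) ≤ Real.log (c * v (n+m)) :=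
          Real.log_le_log (mul_pos (mul_pos hcpos (hvpos _)) (mul_pos hcpos (hvpos _))) h1
        rw [Real.log_mul (mul_pos hcpos (hvpos _)).ne' (mul_pos hcpos (hvpos _)).ne'] at h2
        linarith
      have hvub : ∀ n : ℕ, v n ≤ (ℓ:ℝ)^n * (δ^n)^q := by
        intro n
        rw [hvn n]
        calc (∑ k ∈ Finset.range (ℓ^n), mss (nuT μ) (adicI ℓ n k) ^ q)
            ≤ ∑ k ∈ Finset.range (ℓ^n), (δ^n)^q :=
              Finset.sum_le_sum fun k hk =>
                Real.rpow_le_rpow_of_nonpos (hδn n) (hmass n k (Finset.mem_range.1 hk)) hq.le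
          _ = (ℓ:ℝ)^n * (δ^n)^q := by
              rw [Finset.sum_const, Finset.card_range, nsmul_eq_mul]
              push_cast
              ring
      have hbdd : BddBelow (Set.range fun n : ℕ => -Real.log (c * v n) / n) := by
        refine ⟨min 0 (-(Real.log ℓ + q * Real.log δ)), ?_⟩
        rintro x ⟨n, rfl⟩
        rcases Nat.eq_zero_or_pos n with rfl | hn
        · refine le_trans (min_le_left _ _) (le_of_eq ?_)
          show (0:ℝ) = -Real.log (c * v 0) / ((0:ℕ):ℝ)
          rw [Nat.cast_zero, _root_.div_zero]
        · have hnR : (0:ℝ) < n := by exact_mod_cast hn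
          refine le_trans (min_le_right _ _) ?_
          show -(Real.log ℓ + q * Real.log δ) ≤ -Real.log (c * v n) / (n:ℝ)
          rw [le_div_iff₀ hnR]
          have hlogv : Real.log (v n) ≤ (n:ℝ) * Real.log ℓ + q * ((n:ℝ) * Real.log δ) := by
            have hlpos : (0:ℝ) < (ℓ:ℝ)^n := by positivity
            have h2 := Real.log_le_log (hvpos n) (hvub n)
            rwa [Real.log_mul hlpos.ne' (Real.rpow_pos_of_pos (hδn n) q).ne', Real.log_pow,
              Real.log_rpow (hδn n), Real.log_pow] at h2
          have hlogc : Real.log c ≤ 0 := by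
            rw [hc, Real.log_rpow two_pos]
            exact mul_nonpos_of_nonpos_of_nonneg hq.le (Real.log_nonneg one_le_two)
          rw [Real.log_mul (ne_of_gt hcpos) (ne_of_gt (hvpos n))]
          nlinarith [hlogv, hlogc]
      have hten := hsubad.tendsto_lim hbdd
      have hten2 := hten.neg.sub (tendsto_const_div_atTop_nhds_zero_nat (Real.log c))
      refine ⟨-hsubad.lim - 0, ?_⟩
      refine hten2.congr fun n => ?_
      rw [neg_div, neg_neg, Real.log_mul (ne_of_gt hcpos) (ne_of_gt (hvpos n)), add_div]
      ring
  obtain ⟨L', hL'⟩ := main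
  refine ⟨Real.exp L', ?_⟩
  have hfun : ∀ n : ℕ, uSeq ℓ (nuT μ) q n ^ ((1:ℝ)/n) = Real.exp (Real.log (v n) / n) := by
    intro n
    rw [hueq n, Real.rpow_def_of_pos (hvpos n), mul_one_div]
  refine Tendsto.congr (fun n => (hfun n).symm) ?_
  exact (Real.continuous_exp.tendsto L').comp hL'

end S14

/-- `ν(I) = ‖M_I‖`, `ν(IJ) ≤ 2 ν(I) ν(J)`, and consequently
`v_n^{1/n}` converges, where `v_n = ∑_{I ∈ F_n} ν(I)^q`. -/
theorem stmt14 (ℓ : ℕ) (hℓ : 2 ≤ ℓ) (p : ℕ → ℝ) (hp : ∀ i, 0 ≤ p i)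
    (hsum : ∑ i ∈ Finset.range (2 * ℓ), p i = 1)
    (hpos : ∀ i < ℓ, 0 < p i + p (i + ℓ))
    (μ : Measure ℝ) [IsProbabilityMeasure μ]
    (hself : μ = ∑ i ∈ Finset.range (2 * ℓ), ENNReal.ofReal (p i) • μ.map (simMapT ℓ i)) :
    (∀ (n : ℕ) (ε : Fin n → ℕ), (∀ i, ε i < ℓ) →
        mss (nuT μ) (wordI ℓ n ε) = normH2 (List.ofFn (fun i => MmatT ℓ p (ε i))).prod) ∧
      (∀ (n q' k j : ℕ), k < ℓ ^ n → j < ℓ ^ q' →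
        mss (nuT μ) (adicI ℓ (n + q') (k * ℓ ^ q' + j)) ≤
          2 * mss (nuT μ) (adicI ℓ n k) * mss (nuT μ) (adicI ℓ q' j)) ∧
      ∀ q : ℝ, ∃ L : ℝ,
        Tendsto (fun n : ℕ => uSeq ℓ (nuT μ) q n ^ ((1 : ℝ) / n)) atTop (𝓝 L) := by
  refine ⟨fun n ε hε => S14.part1 hℓ hp hsum hpos hself n ε hε,
    fun n q' k j hk hj => S14.part2lem hℓ hp hsum hpos hself n q' k j hk hj,
    fun q => S14.part3 hℓ hp hsum hpos hself q⟩


end
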